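/- The function A ↦ 1/det(A) is convex on the set of positive definite n×n Hermitian matrices; that is, for all positive definite Hermitian matrices A, B and t ∈ [0,1], one has 1/det(tA + (1−t)B) ≤ t/det(A) + (1−t)/det(B). -/

import Mathlib

open scoped ComplexOrder
open Matrix Finset
open scoped MatrixOrder

/-- Conjugation of a positive definite matrix by an invertible Hermitian matrix. -/
lemma aux_posdef_conj {n : ℕ} {B T : Matrix (Fin n) (Fin n) ℂ}
    (hB : B.PosDef) (hT : T.IsHermitian) (hTinv : ∃ S, S * T = 1) :
    (T * B * T).PosDef := by
  obtain ⟨S, hST⟩ := hTinv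
  refine Matrix.PosDef.of_dotProduct_mulVec_pos ?_ ?_
  · unfold Matrix.IsHermitian
    rw [conjTranspose_mul, conjTranspose_mul, hT.eq, hB.isHermitian.eq]
    rw [mul_assoc]
  · intro x hx
    have hy : T *ᵥ x ≠ 0 := by
      intro h
      apply hx
      have : S *ᵥ (T *ᵥ x) = x := by rw [mulVec_mulVec, hST, one_mulVec]
      rw [h, mulVec_zero] at this
      exact this.symm
    have key : star x ⬝ᵥ ((T * B * T) *ᵥ x) = star (T *ᵥ x) ⬝ᵥ (B *ᵥ (T *ᵥ x)) := by
      rw [star_mulVec, hT.eq, ← mulVec_mulVec, ← mulVec_mulVec]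
      exact Matrix.dotProduct_mulVec _ T _
    rw [key]
    exact hB.dotProduct_mulVec_pos hy
  

lemma aux_scalar {ι : Type*} [Fintype ι] (μ : ι → ℝ) (hμ : ∀ i, 0 < μ i)
    (t : ℝ) (ht0 : 0 ≤ t) (h1t : 0 ≤ 1 - t) :
    1 / ∏ i, (t + (1 - t) * μ i) ≤ t + (1 - t) * (1 / ∏ i, μ i) := by
  set m := ∏ i, μ i with hmdef
  have hm : 0 < m := Finset.prod_pos fun i _ => hμ i
  have key1 : m ^ (1 - t) ≤ ∏ i, (t + (1 - t) * μ i) := by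
    rw [← Real.finset_prod_rpow _ _ (fun i _ => (hμ i).le)]
    refine Finset.prod_le_prod (fun i _ => Real.rpow_nonneg (hμ i).le _) (fun i _ => ?_)
    have := Real.geom_mean_le_arith_mean2_weighted ht0 h1t zero_le_one (hμ i).le (by ring)
    simpa using this
  have key2 : (1 / m) ^ (1 - t) ≤ t + (1 - t) * (1 / m) := by
    have := Real.geom_mean_le_arith_mean2_weighted ht0 h1t zero_le_one
      (by positivity : (0:ℝ) ≤ 1 / m) (by ring)
    simpa using this
  calc 1 / ∏ i, (t + (1 - t) * μ i) ≤ 1 / m ^ (1 - t) :=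
        one_div_le_one_div_of_le (Real.rpow_pos_of_pos hm _) key1
    _ = (1 / m) ^ (1 - t) := by
        simp [one_div, Real.inv_rpow hm.le]
    _ ≤ t + (1 - t) * (1 / m) := key2

/-- Convexity of `A ↦ 1/det A` on positive definite Hermitian matrices. -/
theorem inv_det_convex (n : ℕ) (A B : Matrix (Fin n) (Fin n) ℂ)
    (hA : A.PosDef) (hB : B.PosDef) (t : ℝ) (ht0 : 0 ≤ t) (ht1 : t ≤ 1) :
    1 / (((t : ℂ) • A + ((1 - t : ℝ) : ℂ) • B).det).re ≤
      t / A.det.re + (1 - t) / B.det.re := by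
  have h1t : (0:ℝ) ≤ 1 - t := by linarith
  set S := CFC.sqrt A with hSdef
  have hS : S.PosSemidef := (CFC.sqrt_nonneg A).posSemidef
  have hSS : S * S = A := CFC.sqrt_mul_sqrt_self A hA.posSemidef.nonneg
  have hdetA : (0:ℂ) < A.det := hA.det_pos
  have hdetS : IsUnit S.det := by
    have h2 : S.det * S.det = A.det := by rw [← det_mul, hSS]
    have : A.det ≠ 0 := ne_of_gt hdetA
    refine isUnit_iff_ne_zero.mpr fun h => this ?_
    rw [← h2, h, mul_zero]
  set T := S⁻¹ with hTdef
  have hST : S * T = 1 := mul_nonsing_inv _ hdetS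
  have hTS : T * S = 1 := nonsing_inv_mul _ hdetS
  have hT : T.IsHermitian := by
    unfold Matrix.IsHermitian
    rw [hTdef, conjTranspose_nonsing_inv, hS.isHermitian.eq]
  set M := T * B * T with hMdef
  have hM : M.PosDef := aux_posdef_conj hB hT ⟨S, hST⟩
  set μ := hM.isHermitian.eigenvalues with hμdef
  have hμpos : ∀ i, 0 < μ i := hM.eigenvalues_pos
  -- decomposition of the convex combination
  have hdecomp : (t : ℂ) • A + ((1 - t : ℝ) : ℂ) • B
      = S * ((t : ℂ) • (1 : Matrix (Fin n) (Fin n) ℂ) + ((1 - t : ℝ) : ℂ) • M) * S := by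
    rw [Matrix.mul_add, Matrix.add_mul, Matrix.mul_smul, Matrix.smul_mul,
      Matrix.mul_smul, Matrix.smul_mul, mul_one, hSS, hMdef]
    congr 2
    symm
    rw [show S * (T * B * T) * S = (S * T) * B * (T * S) from by noncomm_ring,
      hST, hTS, one_mul, mul_one]
  -- spectral decomposition of M
  set U : Matrix (Fin n) (Fin n) ℂ :=
    (Matrix.IsHermitian.eigenvectorUnitary hM.isHermitian : Matrix (Fin n) (Fin n) ℂ) with hUdef
  have hUU : U * star U = 1 :=
    Matrix.mem_unitaryGroup_iff.mp (Matrix.IsHermitian.eigenvectorUnitary hM.isHermitian).2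
  have hspec : M = U * Matrix.diagonal (RCLike.ofReal ∘ μ) * star U :=
    hM.isHermitian.spectral_theorem
  have hdiag : (t : ℂ) • (1 : Matrix (Fin n) (Fin n) ℂ)
      + ((1 - t : ℝ) : ℂ) • Matrix.diagonal (RCLike.ofReal ∘ μ)
      = Matrix.diagonal (fun i => ((t + (1 - t) * μ i : ℝ) : ℂ)) := by
    ext i j
    by_cases h : i = j <;>
      simp [h, Matrix.one_apply, Matrix.diagonal_apply]
  have hcomb : (t : ℂ) • (1 : Matrix (Fin n) (Fin n) ℂ) + ((1 - t : ℝ) : ℂ) • M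
      = U * Matrix.diagonal (fun i => ((t + (1 - t) * μ i : ℝ) : ℂ)) * star U := by
    rw [← hdiag, Matrix.mul_add, Matrix.add_mul, Matrix.mul_smul, Matrix.smul_mul,
      Matrix.mul_smul, Matrix.smul_mul, mul_one, hUU, ← hspec]
  have hdet1 : ((t : ℂ) • (1 : Matrix (Fin n) (Fin n) ℂ) + ((1 - t : ℝ) : ℂ) • M).det
      = ((∏ i, (t + (1 - t) * μ i) : ℝ) : ℂ) := by
    rw [hcomb, Matrix.det_mul_right_comm, hUU, one_mul, Matrix.det_diagonal]
    push_cast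
    rfl
  have hSdetA : S.det * S.det = A.det := by rw [← Matrix.det_mul, hSS]
  have hdetmix : ((t : ℂ) • A + ((1 - t : ℝ) : ℂ) • B).det
      = A.det * ((∏ i, (t + (1 - t) * μ i) : ℝ) : ℂ) := by
    rw [hdecomp, Matrix.det_mul, Matrix.det_mul, hdet1, mul_right_comm, hSdetA]
  have hBSM : B = S * M * S := by
    symm
    rw [hMdef, show S * (T * B * T) * S = (S * T) * B * (T * S) from by noncomm_ring,
      hST, hTS, one_mul, mul_one]
  have hdetM : M.det = ((∏ i, μ i : ℝ) : ℂ) := by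
    rw [hM.isHermitian.det_eq_prod_eigenvalues]
    push_cast
    rfl
  have hdetB : B.det = A.det * ((∏ i, μ i : ℝ) : ℂ) := by
    rw [hBSM, Matrix.det_mul, Matrix.det_mul, hdetM, mul_right_comm, hSdetA]
  -- pass to real parts
  have hAre : A.det = ((A.det.re : ℝ) : ℂ) := by
    have him : A.det.im = 0 := ((Complex.lt_def.mp hdetA).2).symm
    exact Complex.ext rfl (by simp [him])
  have hdA : (0:ℝ) < A.det.re := (Complex.lt_def.mp hdetA).1
  set dA := A.det.re with hdAdef
  set c := ∏ i, (t + (1 - t) * μ i) with hcdef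
  set m := ∏ i, μ i with hmdef
  have hm : 0 < m := Finset.prod_pos fun i _ => hμpos i
  have hre_mix : (((t : ℂ) • A + ((1 - t : ℝ) : ℂ) • B).det).re = dA * c := by
    rw [hdetmix, hAre, ← Complex.ofReal_mul, Complex.ofReal_re]
  have hre_B : B.det.re = dA * m := by
    rw [hdetB, hAre, ← Complex.ofReal_mul, Complex.ofReal_re]
  rw [hre_mix, hre_B]
  have key := aux_scalar μ hμpos t ht0 h1t
  rw [← hcdef, ← hmdef] at key
  have h2 : 1 / (dA * c) = (1 / dA) * (1 / c) := by
    rw [div_mul_div_comm, one_mul]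
  have h3 : t / dA + (1 - t) / (dA * m) = (1 / dA) * (t + (1 - t) * (1 / m)) := by
    field_simp
  rw [h2, h3]
  exact mul_le_mul_of_nonneg_left key (by positivity)
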